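/- Let Δ° ⊂ ℝⁿ be an n-dimensional lattice polytope with 0 in its interior, and let u₁, ..., uₙ be linearly independent boundary lattice points of Δ° such that every (n-1)-element subset of {u₁,...,uₙ} lies on a common facet of Δ°, but all n of them do not. Let m ∈ (ℝⁿ)* be the linear functional with ⟨m, uᵢ⟩ = -1 for all i. Then every lattice point p of Δ° with ⟨m, p⟩ < -1 lies in the cone spanned by u₁, ..., uₙ. -/
import Mathlib


/-- Cast an integer vector to a real vector. -/
def toR {n : ℕ} (w : Fin n → ℤ) : Fin n → ℝ := fun i => (w i : ℝ)

/-- Let `Δ° = P ⊂ ℝⁿ` be an `n`-dimensional lattice polytope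
(convex, bounded) with `0` in its interior, and let `u₁, …, uₙ` be linearly
independent boundary lattice points such that, for each `j`, the points
`{uᵢ : i ≠ j}` lie on a common facet `Θⱼ` (with supporting functional `mf j`
satisfying `⟨mf j, x⟩ ≥ -1` on `P`, equality on `{uᵢ : i ≠ j}`, and
`⟨mf j, uⱼ⟩ > -1`, witnessing that all `n` points lie on no common facet).  Let `m`
be the linear functional with `⟨m, uᵢ⟩ = -1` for all `i`.  Then every lattice point
`p` of `Δ°` with `⟨m, p⟩ < -1` lies in the cone spanned by `u₁, …, uₙ`. -/
theorem stmt_10 {n : ℕ} (P : Set (Fin n → ℝ))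
    (hconv : Convex ℝ P) (hbdd : Bornology.IsBounded P)
    (h0 : (0 : Fin n → ℝ) ∈ interior P)
    (u : Fin n → (Fin n → ℤ))
    (hu_indep : LinearIndependent ℝ (fun i => toR (u i)))
    (huP : ∀ i, toR (u i) ∈ frontier P)
    (m : Fin n → ℝ) (hm : ∀ i, ∑ k, m k * (u i k : ℝ) = -1)
    (mf : Fin n → (Fin n → ℝ))
    (hmf_supp : ∀ j, ∀ x ∈ P, (-1 : ℝ) ≤ ∑ k, mf j k * x k)
    (hmf_eq : ∀ j i, i ≠ j → ∑ k, mf j k * (u i k : ℝ) = -1)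
    (hmf_ne : ∀ j, (-1 : ℝ) < ∑ k, mf j k * (u j k : ℝ))
    (p : Fin n → ℤ) (hp : toR p ∈ P) (hmp : ∑ k, m k * (p k : ℝ) < -1) :
    ∃ a : Fin n → ℝ, (∀ i, 0 ≤ a i) ∧ toR p = ∑ i, a i • toR (u i) := by
  rcases Nat.eq_zero_or_pos n with hn | hn
  · exfalso; subst hn; simp at hmp; linarith
  haveI : NeZero n := ⟨hn.ne'⟩
  have hcard : Fintype.card (Fin n) = Module.finrank ℝ (Fin n → ℝ) := by simp
  let B := basisOfLinearIndependentOfCardEqFinrank hu_indep hcard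
  set a : Fin n → ℝ := fun i => B.repr (toR p) i with ha
  have hB : ∀ i, B i = toR (u i) := fun i =>
    congrFun (coe_basisOfLinearIndependentOfCardEqFinrank hu_indep hcard) i
  have hrepr : toR p = ∑ i, a i • toR (u i) := by
    conv_lhs => rw [← B.sum_repr (toR p)]
    exact Finset.sum_congr rfl fun i _ => by rw [hB]
  have key : ∀ w : Fin n → ℝ, ∑ k, w k * (p k : ℝ)
      = ∑ i, a i * (∑ k, w k * (u i k : ℝ)) := by
    intro w
    have : ∀ k, (p k : ℝ) = ∑ i, a i * (u i k : ℝ) := by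
      intro k
      have := congrFun hrepr k
      simpa [toR, Finset.sum_apply] using this
    calc ∑ k, w k * (p k : ℝ) = ∑ k, ∑ i, w k * (a i * (u i k : ℝ)) := by
          simp_rw [this, Finset.mul_sum]
      _ = ∑ i, ∑ k, w k * (a i * (u i k : ℝ)) := Finset.sum_comm
      _ = ∑ i, a i * (∑ k, w k * (u i k : ℝ)) := by
          refine Finset.sum_congr rfl fun i _ => ?_
          rw [Finset.mul_sum]
          exact Finset.sum_congr rfl fun k _ => by ring
  have hS : 1 < ∑ i, a i := by
    have h := key m
    rw [h] at hmp
    simp only [hm, mul_neg_one] at hmp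
    rw [Finset.sum_neg_distrib] at hmp
    linarith
  refine ⟨a, fun j => ?_, hrepr⟩
  have h1 : (-1 : ℝ) ≤ ∑ i, a i * (∑ k, mf j k * (u i k : ℝ)) := by
    rw [← key]
    exact hmf_supp j _ hp
  rw [← Finset.add_sum_erase _ _ (Finset.mem_univ j)] at h1
  have h2 : ∑ i ∈ Finset.univ.erase j, a i * (∑ k, mf j k * (u i k : ℝ))
      = -((∑ i, a i) - a j) := by
    rw [← Finset.sum_erase_eq_sub (Finset.mem_univ j), ← Finset.sum_neg_distrib]
    exact Finset.sum_congr rfl fun i hi => by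
      rw [hmf_eq j i (Finset.ne_of_mem_erase hi)]; ring
  rw [h2] at h1
  by_contra hneg
  push_neg at hneg
  have hc := hmf_ne j
  nlinarith
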